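/- Let P ⊆ ℤ be the set of prime numbers. The C*-subalgebra of B(ℓ²(P)) generated by the family {tₙ : n ∈ ℤ} equals the set of operators of the form λ·1 + k with λ ∈ ℂ and k a compact operator on ℓ²(P) if and only if for every positive even integer n the set of primes p with p + n prime is finite (i.e., if and only if de Polignac's conjecture fails for every even n). -/

import Mathlib

noncomputable section

/-- The set of prime numbers, viewed as a subset of ℤ. -/
abbrev Pr : Set ℤ := {x : ℤ | ∃ p : ℕ, p.Prime ∧ x = (p : ℤ)}

abbrev l2P : Type := lp (fun _ : Pr => ℂ) 2

/-- The standard basis vector δₓ of ℓ²(P). -/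
def δ (x : Pr) : l2P := lp.single 2 x 1

open scoped ComplexInnerProductSpace InnerProductSpace ENNReal

/-! ### Number theory facts -/

lemma Pr.two_le {x : ℤ} (hx : x ∈ Pr) : 2 ≤ x := by
  obtain ⟨p, hp, rfl⟩ := hx
  exact_mod_cast hp.two_le

lemma two_mem_Pr : (2 : ℤ) ∈ Pr := ⟨2, Nat.prime_two, by norm_num⟩
lemma three_mem_Pr : (3 : ℤ) ∈ Pr := ⟨3, Nat.prime_three, by norm_num⟩

lemma Pr.eq_two_of_even {x : ℤ} (hx : x ∈ Pr) (he : Even x) : x = 2 := by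
  obtain ⟨p, hp, rfl⟩ := hx
  have : Even p := by exact_mod_cast (Int.even_coe_nat p).mp he
  have := (Nat.Prime.even_iff hp).mp this
  exact_mod_cast congrArg (Nat.cast : ℕ → ℤ) this

lemma Pr.infinite : (Pr : Set ℤ).Infinite := by
  have : Pr = (fun p : ℕ => (p : ℤ)) '' {p | p.Prime} := by
    ext x; constructor
    · rintro ⟨p, hp, rfl⟩; exact ⟨p, hp, rfl⟩
    · rintro ⟨p, hp, rfl⟩; exact ⟨p, hp, rfl⟩
  rw [this]
  exact (Nat.infinite_setOf_prime).image (fun a _ b _ h => by exact_mod_cast h)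

instance : Infinite Pr := Pr.infinite.to_subtype

/-- The key combinatorial lemma: for every prime `r` there is an integer `a` such that
for a prime `x`, `x + a` is prime iff `x = r`. -/
lemma exists_detecting (r : Pr) : ∃ a : ℤ, ∀ x : Pr, ((x : ℤ) + a ∈ Pr ↔ x = r) := by
  by_cases h2 : (r : ℤ) = 2
  · refine ⟨1, fun x => ⟨fun hx => ?_, fun hx => ?_⟩⟩
    · rcases Int.even_or_odd (x : ℤ) with he | ho
      · exact Subtype.ext ((Pr.eq_two_of_even x.2 he).trans h2.symm)
      · exfalso
        have : ((x : ℤ) + 1) = 2 := Pr.eq_two_of_even hx (by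
          rcases ho with ⟨k, hk⟩; exact ⟨k + 1, by omega⟩)
        have := Pr.two_le x.2; omega
    · rw [hx, h2]; exact ⟨3, Nat.prime_three, by norm_num⟩
  · have hodd : Odd (r : ℤ) := by
      rcases Int.even_or_odd (r : ℤ) with he | ho
      · exact absurd (Pr.eq_two_of_even r.2 he) h2
      · exact ho
    have hr3 : 3 ≤ (r : ℤ) := by have := Pr.two_le r.2; omega
    refine ⟨2 - (r : ℤ), fun x => ⟨fun hx => ?_, fun hx => ?_⟩⟩
    · -- x and x + 2 - r have different parity
      rcases Int.even_or_odd (x : ℤ) with he | ho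
      · -- x = 2, so 4 - r ∈ Pr, but 4 - r ≤ 1, contradiction
        have hx2 : (x : ℤ) = 2 := Pr.eq_two_of_even x.2 he
        have : (2 : ℤ) ≤ (x : ℤ) + (2 - r) := Pr.two_le hx
        omega
      · have : Even ((x : ℤ) + (2 - r)) := by
          rcases ho with ⟨k, hk⟩; rcases hodd with ⟨m, hm⟩
          exact ⟨k - m + 1, by omega⟩
        have := Pr.eq_two_of_even hx this
        have : (x : ℤ) = (r : ℤ) := by omega
        exact Subtype.ext this
    · rw [hx]
      have h22 : (r : ℤ) + (2 - (r : ℤ)) = 2 := by ring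
      rw [h22]; exact two_mem_Pr

/-- Under the finiteness assumption for positive even `n`, the pair set is finite
for every nonzero `n`. -/
lemma pairset_finite (H : ∀ n : ℤ, 0 < n → Even n → {p : ℤ | p ∈ Pr ∧ p + n ∈ Pr}.Finite)
    {n : ℤ} (hn : n ≠ 0) : {p : ℤ | p ∈ Pr ∧ p + n ∈ Pr}.Finite := by
  rcases Int.even_or_odd n with he | ho
  · rcases lt_trichotomy n 0 with hlt | h0 | hgt
    · have hfin := H (-n) (by omega) he.neg
      have : {p : ℤ | p ∈ Pr ∧ p + n ∈ Pr} ⊆ (fun q => q - n) '' {p : ℤ | p ∈ Pr ∧ p + (-n) ∈ Pr} := by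
        rintro p ⟨hp, hpn⟩
        exact ⟨p + n, ⟨hpn, by simpa using hp⟩, by ring⟩
      exact (hfin.image _).subset this
    · exact absurd h0 hn
    · exact H n hgt he
  · -- odd case: set ⊆ {2, 2 - n}
    apply ((Set.finite_singleton (2 - n)).insert (2:ℤ)).subset
    rintro p ⟨hp, hpn⟩
    rcases Int.even_or_odd p with he | hop
    · left; exact Pr.eq_two_of_even hp he
    · right
      have : Even (p + n) := by
        rcases hop with ⟨k, hk⟩; rcases ho with ⟨m, hm⟩
        exact ⟨k + m + 1, by omega⟩
      have := Pr.eq_two_of_even hpn this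
      simp only [Set.mem_singleton_iff]; omega

/-! ### Basis lemmas -/

lemma delta_apply (x y : Pr) : (δ x : ∀ _ : Pr, ℂ) y = if y = x then 1 else 0 := by
  rw [δ, lp.single_apply]
  split_ifs with h
  · subst h; simp
  · simp [Pi.single_apply, h]

lemma inner_delta_left (x : Pr) (f : l2P) : ⟪δ x, f⟫_ℂ = f x := by
  rw [δ, lp.inner_single_left]; simp

lemma inner_delta_right (x : Pr) (f : l2P) : ⟪f, δ x⟫_ℂ = (starRingEnd ℂ) (f x) := by
  rw [← inner_conj_symm, inner_delta_left]

lemma inner_delta_delta (x y : Pr) : ⟪δ x, δ y⟫_ℂ = if x = y then 1 else 0 := by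
  rw [inner_delta_left, delta_apply]

lemma norm_delta (x : Pr) : ‖δ x‖ = 1 := by
  rw [δ]
  have := lp.norm_single (E := fun _ : Pr => ℂ) (p := 2) (by norm_num) x (1:ℂ)
  simpa using this

lemma hasSum_delta (f : l2P) : HasSum (fun x : Pr => f x • δ x) f := by
  have h := lp.hasSum_single (E := fun _ : Pr => ℂ) (p := 2) (by norm_num) f
  convert h using 2 with x
  rw [δ, ← lp.single_smul]
  norm_num

/-- Two operators agreeing on all basis vectors are equal. -/
lemma clm_ext_delta {T T' : l2P →L[ℂ] l2P} (h : ∀ x, T (δ x) = T' (δ x)) : T = T' := by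
  apply ContinuousLinearMap.ext; intro f
  have h1 : HasSum (fun x : Pr => T (f x • δ x)) (T f) := (hasSum_delta f).mapL T
  have h2 : HasSum (fun x : Pr => T' (f x • δ x)) (T' f) := (hasSum_delta f).mapL T'
  refine h1.unique ?_
  convert h2 using 2 with x
  simp [h x]

lemma l2P_ext {f g : l2P} (h : ∀ x, f x = g x) : f = g := lp.ext (funext h)
/-! ### Rank one operators and finite projections -/
open ContinuousLinearMap in
def rk1 (u v : l2P) : l2P →L[ℂ] l2P :=
  (ContinuousLinearMap.toSpanSingleton ℂ u).comp (innerSL ℂ v)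

lemma rk1_apply (u v f : l2P) : rk1 u v f = ⟪v, f⟫_ℂ • u := rfl

lemma rk1_sub_right (u v w : l2P) : rk1 u v - rk1 u w = rk1 u (v - w) := by
  apply ContinuousLinearMap.ext; intro f
  simp [rk1_apply, inner_sub_left, sub_smul]

lemma rk1_norm_le (u v : l2P) : ‖rk1 u v‖ ≤ ‖v‖ * ‖u‖ := by
  apply ContinuousLinearMap.opNorm_le_bound _ (by positivity)
  intro f
  rw [rk1_apply, norm_smul]
  calc ‖⟪v, f⟫_ℂ‖ * ‖u‖ ≤ (‖v‖ * ‖f‖) * ‖u‖ := by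
        gcongr; exact norm_inner_le_norm v f
    _ = ‖v‖ * ‖u‖ * ‖f‖ := by ring

lemma adjoint_rk1 (u v : l2P) : ContinuousLinearMap.adjoint (rk1 u v) = rk1 v u := by
  symm
  rw [ContinuousLinearMap.eq_adjoint_iff]
  intro f g
  simp only [rk1_apply, inner_smul_left, inner_smul_right, inner_conj_symm]
  ring

def Pj (S : Finset Pr) : l2P →L[ℂ] l2P := ∑ x ∈ S, rk1 (δ x) (δ x)

lemma Pj_apply (S : Finset Pr) (f : l2P) : Pj S f = ∑ x ∈ S, f x • δ x := by
  rw [Pj, ContinuousLinearMap.sum_apply]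
  exact Finset.sum_congr rfl fun x _ => by rw [rk1_apply, inner_delta_left]

lemma Pj_coord_not_mem (S : Finset Pr) (f : l2P) {x : Pr} (hx : x ∉ S) :
    (Pj S f : ∀ _ : Pr, ℂ) x = 0 := by
  rw [Pj_apply, lp.coeFn_sum, Finset.sum_apply]
  refine Finset.sum_eq_zero fun y hy => ?_
  have : (f y • δ y : l2P) x = f y * (δ y : ∀ _ : Pr, ℂ) x := rfl
  have hxy : ¬ (x = y) := fun h => hx (by rw [h]; exact hy)
  rw [this, delta_apply, if_neg hxy, mul_zero]

lemma adjoint_Pj (S : Finset Pr) : ContinuousLinearMap.adjoint (Pj S) = Pj S := by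
  rw [Pj, map_sum]
  exact Finset.sum_congr rfl fun x _ => adjoint_rk1 _ _

lemma tendsto_Pj (f : l2P) :
    Filter.Tendsto (fun S => Pj S f) Filter.atTop (nhds f) := by
  have h := (hasSum_delta f)
  rw [HasSum] at h
  convert h using 2 with S
  · rw [Pj_apply]
  · rfl

lemma rpow_two_le {a b : ℝ} (ha : 0 ≤ a) (hb : 0 ≤ b)
    (h : a ^ (2:ℝ≥0∞).toReal ≤ b ^ (2:ℝ≥0∞).toReal) : a ≤ b := by
  have e : (2:ℝ≥0∞).toReal = ((2:ℕ):ℝ) := by norm_num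
  rw [e, Real.rpow_natCast, Real.rpow_natCast] at h
  nlinarith

lemma norm_sub_Pj_le (S : Finset Pr) (f : l2P) : ‖f - Pj S f‖ ≤ ‖f‖ := by
  have h2 : (0:ℝ) < (2 : ℝ≥0∞).toReal := by norm_num
  have key := lp.norm_compl_sum_single h2 f S
  have hsingle : ∀ x : Pr, lp.single 2 x (f x) = f x • δ x := fun x => by
    rw [δ, ← lp.single_smul]; norm_num
  rw [show (∑ x ∈ S, lp.single 2 x (f x) : l2P) = Pj S f by
    rw [Pj_apply]; exact Finset.sum_congr rfl fun x _ => hsingle x] at key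
  have h1 : ‖f - Pj S f‖ ^ (2:ℝ≥0∞).toReal ≤ ‖f‖ ^ (2:ℝ≥0∞).toReal := by
    rw [key]
    have : (0:ℝ) ≤ ∑ x ∈ S, ‖f x‖ ^ (2:ℝ≥0∞).toReal :=
      Finset.sum_nonneg fun x _ => Real.rpow_nonneg (norm_nonneg _) _
    linarith
  exact rpow_two_le (norm_nonneg _) (norm_nonneg _) h1

lemma norm_sub_Pj_mono {S S' : Finset Pr} (h : S ⊆ S') (f : l2P) :
    ‖f - Pj S' f‖ ≤ ‖f - Pj S f‖ := by
  have h2 : (0:ℝ) < (2 : ℝ≥0∞).toReal := by norm_num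
  have hsingle : ∀ x : Pr, lp.single 2 x (f x) = f x • δ x := fun x => by
    rw [δ, ← lp.single_smul]; norm_num
  have key := fun T => lp.norm_compl_sum_single h2 f T
  have keyP : ∀ T : Finset Pr, ‖f - Pj T f‖ ^ (2:ℝ≥0∞).toReal
      = ‖f‖ ^ (2:ℝ≥0∞).toReal - ∑ x ∈ T, ‖f x‖ ^ (2:ℝ≥0∞).toReal := by
    intro T
    rw [show (Pj T f : l2P) = ∑ x ∈ T, lp.single 2 x (f x) by
      rw [Pj_apply]; exact Finset.sum_congr rfl fun x _ => (hsingle x).symm]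
    exact key T
  have hsum : ∑ x ∈ S, ‖f x‖ ^ (2:ℝ≥0∞).toReal ≤ ∑ x ∈ S', ‖f x‖ ^ (2:ℝ≥0∞).toReal :=
    Finset.sum_le_sum_of_subset_of_nonneg h fun x _ _ => Real.rpow_nonneg (norm_nonneg _) _
  have h1 : ‖f - Pj S' f‖ ^ (2:ℝ≥0∞).toReal ≤ ‖f - Pj S f‖ ^ (2:ℝ≥0∞).toReal := by
    rw [keyP S, keyP S']; linarith
  exact rpow_two_le (norm_nonneg _) (norm_nonneg _) h1
/-! ### Compactness lemmas -/

open ContinuousLinearMap Metric Filter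

lemma isCompact_of_finrank {T : l2P →L[ℂ] l2P} (s : Finset l2P)
    (h : ∀ f, T f ∈ Submodule.span ℂ (s : Set l2P)) : IsCompactOperator T := by
  set W := Submodule.span ℂ (s : Set l2P) with hW
  haveI : FiniteDimensional ℂ W := FiniteDimensional.span_of_finite ℂ s.finite_toSet
  haveI : ProperSpace W := FiniteDimensional.proper ℂ W
  refine ⟨Subtype.val '' Metric.closedBall (0 : W) ‖T‖,
    (isCompact_closedBall _ _).image continuous_subtype_val, ?_⟩
  apply Filter.mem_of_superset (Metric.closedBall_mem_nhds (0:l2P) one_pos)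
  intro f hf
  refine ⟨⟨T f, h f⟩, ?_, rfl⟩
  rw [Metric.mem_closedBall, dist_zero_right]
  have hco : ‖(⟨T f, h f⟩ : W)‖ = ‖T f‖ := rfl
  rw [hco]
  calc ‖T f‖ ≤ ‖T‖ * ‖f‖ := T.le_opNorm f
    _ ≤ ‖T‖ * 1 := mul_le_mul_of_nonneg_left
        (by rwa [Metric.mem_closedBall, dist_zero_right] at hf) (norm_nonneg _)
    _ = ‖T‖ := mul_one _

lemma trunc {k : l2P →L[ℂ] l2P} (hk : IsCompactOperator k) {ε : ℝ} (hε : 0 < ε) :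
    ∃ S : Finset Pr, ∀ f, ‖k f - Pj S (k f)‖ ≤ ε * ‖f‖ := by
  have hcpt : IsCompact (closure (k '' Metric.closedBall 0 1)) :=
    hk.isCompact_closure_image_closedBall (M₁ := l2P) (f := (k : l2P →ₗ[ℂ] l2P)) 1
  have htb := hcpt.totallyBounded
  obtain ⟨t, htf, hcover⟩ := totallyBounded_iff.mp htb (ε/3) (by linarith)
  have hch : ∀ y : l2P, ∃ S : Finset Pr, ‖y - Pj S y‖ ≤ ε/3 := by
    intro y
    have h1 : ∀ᶠ S in (atTop : Filter (Finset Pr)), dist (Pj S y) y < ε/3 :=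
      (tendsto_Pj y) (Metric.ball_mem_nhds y (by linarith))
    obtain ⟨S, hS⟩ := h1.exists
    exact ⟨S, by rw [dist_comm, dist_eq_norm] at hS; linarith⟩
  choose g hg using hch
  refine ⟨htf.toFinset.biUnion g, ?_⟩
  set S := htf.toFinset.biUnion g with hS
  have key : ∀ f : l2P, ‖f‖ ≤ 1 → ‖k f - Pj S (k f)‖ ≤ ε/3 + ε/3 := by
    intro f hf
    have hmem : k f ∈ ⋃ y ∈ t, Metric.ball y (ε/3) :=
      hcover (subset_closure ⟨f, by rwa [Metric.mem_closedBall, dist_zero_right], rfl⟩)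
    obtain ⟨y, hyt, hball⟩ := Set.mem_iUnion₂.mp hmem
    have hsub : g y ⊆ S := Finset.subset_biUnion_of_mem g (htf.mem_toFinset.mpr hyt)
    have h1 : ‖(k f - y) - Pj S (k f - y)‖ ≤ ‖k f - y‖ := norm_sub_Pj_le S _
    have h2 : ‖y - Pj S y‖ ≤ ε/3 := le_trans (norm_sub_Pj_mono hsub y) (hg y)
    have hdec : k f - Pj S (k f) = ((k f - y) - Pj S (k f - y)) + (y - Pj S y) := by
      rw [map_sub]; abel
    have hby : ‖k f - y‖ ≤ ε/3 := le_of_lt (by rwa [Metric.mem_ball, dist_eq_norm] at hball)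
    calc ‖k f - Pj S (k f)‖ ≤ ‖(k f - y) - Pj S (k f - y)‖ + ‖y - Pj S y‖ := by
          rw [hdec]; exact norm_add_le _ _
      _ ≤ ε/3 + ε/3 := by linarith
  intro f
  rcases eq_or_ne f 0 with rfl | hf0
  · simp
  · have hn : 0 < ‖f‖ := norm_pos_iff.mpr hf0
    set c : ℂ := (‖f‖ : ℂ) with hc
    have hcn : ‖c‖ = ‖f‖ := by rw [hc, Complex.norm_real, norm_norm]
    have hu : ‖(c⁻¹ • f : l2P)‖ ≤ 1 := by
      rw [norm_smul, norm_inv, hcn]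
      rw [inv_mul_cancel₀ (ne_of_gt hn)]
    have hk1 := key _ hu
    have hc0 : c ≠ 0 := by
      rw [hc]
      exact_mod_cast ne_of_gt hn
    have heq : k f - Pj S (k f) = c • (k (c⁻¹ • f) - Pj S (k (c⁻¹ • f))) := by
      simp only [map_smul, smul_sub, smul_smul, mul_inv_cancel₀ hc0, one_smul]
    rw [heq, norm_smul, hcn]
    calc ‖f‖ * ‖k (c⁻¹ • f) - Pj S (k (c⁻¹ • f))‖ ≤ ‖f‖ * (ε/3 + ε/3) := by
          gcongr
      _ ≤ ε * ‖f‖ := by nlinarith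

lemma tail_small {k : l2P →L[ℂ] l2P} (hk : IsCompactOperator k) {ε : ℝ} (hε : 0 < ε) :
    ∃ S : Finset Pr, ∀ x : Pr, x ∉ S → ‖k (δ x)‖ ≤ ε := by
  set m : l2P →L[ℂ] l2P := (ContinuousLinearMap.adjoint k) ∘L k with hm
  have hmc : IsCompactOperator m := by
    have := hk.clm_comp (ContinuousLinearMap.adjoint k)
    exact this
  obtain ⟨S, hS⟩ := trunc hmc (show (0:ℝ) < ε^2/2 by positivity)
  refine ⟨S, fun x hx => ?_⟩
  have h1 : ⟪k (δ x), k (δ x)⟫_ℂ = ⟪δ x, m (δ x)⟫_ℂ := by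
    rw [hm]
    exact (ContinuousLinearMap.adjoint_inner_right k (δ x) (k (δ x))).symm
  have h2 : ⟪δ x, Pj S (m (δ x))⟫_ℂ = 0 := by
    rw [inner_delta_left, Pj_coord_not_mem S _ hx]
  have h3 : ⟪δ x, m (δ x)⟫_ℂ = ⟪δ x, m (δ x) - Pj S (m (δ x))⟫_ℂ := by
    rw [inner_sub_right, h2, sub_zero]
  have hb := hS (δ x)
  rw [norm_delta, mul_one] at hb
  have h4 : ‖⟪δ x, m (δ x)⟫_ℂ‖ ≤ ε^2/2 := by
    rw [h3]
    calc ‖⟪δ x, m (δ x) - Pj S (m (δ x))⟫_ℂ‖ ≤ ‖δ x‖ * ‖m (δ x) - Pj S (m (δ x))‖ :=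
          norm_inner_le_norm _ _
      _ = ‖m (δ x) - Pj S (m (δ x))‖ := by rw [norm_delta, one_mul]
      _ ≤ ε^2/2 := hb
  have h5 : ⟪k (δ x), k (δ x)⟫_ℂ = ((‖k (δ x)‖ : ℂ))^2 := inner_self_eq_norm_sq_to_K _
  have h6 : ‖k (δ x)‖^2 ≤ ε^2/2 := by
    have : ‖((‖k (δ x)‖ : ℂ))^2‖ = ‖k (δ x)‖^2 := by
      rw [norm_pow, Complex.norm_real, norm_norm]
    rw [← this, ← h5, h1]
    exact h4
  nlinarith [norm_nonneg (k (δ x))]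

lemma finite_bad {k : l2P →L[ℂ] l2P} (hk : IsCompactOperator k) {ε : ℝ} (hε : 0 < ε) :
    {x : Pr | ε ≤ ‖k (δ x)‖}.Finite := by
  obtain ⟨S, hS⟩ := tail_small hk (show (0:ℝ) < ε/2 by linarith)
  apply S.finite_toSet.subset
  intro x hx
  by_contra hxS
  have := hS x hxS
  have := hx
  simp only [Set.mem_setOf_eq] at this
  linarith

lemma norm_const_le {c : ℂ} {k : l2P →L[ℂ] l2P} (hk : IsCompactOperator k) :
    ‖c‖ ≤ ‖c • (1 : l2P →L[ℂ] l2P) + k‖ := by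
  refine le_of_forall_pos_le_add fun ε hε => ?_
  obtain ⟨S, hS⟩ := tail_small hk hε
  obtain ⟨x, hx⟩ := Infinite.exists_notMem_finset S
  have h1 : (c • (1 : l2P →L[ℂ] l2P) + k) (δ x) = c • δ x + k (δ x) := by
    simp
  have h2 : ‖c‖ = ‖c • δ x‖ := by rw [norm_smul, norm_delta, mul_one]
  calc ‖c‖ = ‖(c • (1 : l2P →L[ℂ] l2P) + k) (δ x) - k (δ x)‖ := by
        rw [h1]; rw [add_sub_cancel_right]; exact h2
    _ ≤ ‖(c • (1 : l2P →L[ℂ] l2P) + k) (δ x)‖ + ‖k (δ x)‖ := norm_sub_le _ _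
    _ ≤ ‖c • (1 : l2P →L[ℂ] l2P) + k‖ * ‖δ x‖ + ε := by
        gcongr
        · exact ContinuousLinearMap.le_opNorm _ _
        · exact hS x hx
    _ = ‖c • (1 : l2P →L[ℂ] l2P) + k‖ + ε := by rw [norm_delta, mul_one]

/-- Schauder's theorem for our Hilbert space. -/
lemma isCompact_adjoint {k : l2P →L[ℂ] l2P} (hk : IsCompactOperator k) :
    IsCompactOperator (ContinuousLinearMap.adjoint k) := by
  have hchoice : ∀ n : ℕ, ∃ S : Finset Pr, ∀ f, ‖k f - Pj S (k f)‖ ≤ (1/(n+1)) * ‖f‖ :=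
    fun n => trunc hk (by positivity)
  choose S hS using hchoice
  set F : ℕ → l2P →L[ℂ] l2P := fun n => (ContinuousLinearMap.adjoint k) ∘L Pj (S n) with hF
  have hFfin : ∀ n, IsCompactOperator (F n) := by
    intro n
    letI := Classical.decEq l2P
    apply isCompact_of_finrank ((S n).image (fun x => ContinuousLinearMap.adjoint k (δ x)))
    intro f
    have : F n f = ∑ x ∈ S n, f x • ContinuousLinearMap.adjoint k (δ x) := by
      rw [hF]
      simp only [ContinuousLinearMap.comp_apply]
      rw [Pj_apply, map_sum]
      exact Finset.sum_congr rfl fun x _ => by rw [map_smul]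
    rw [this]
    apply Submodule.sum_mem
    intro x hxS
    exact Submodule.smul_mem _ _ (Submodule.subset_span
      (by simp only [Finset.coe_image, Set.mem_image, Finset.mem_coe]; exact ⟨x, hxS, rfl⟩))
  have hnorm : ∀ n, ‖ContinuousLinearMap.adjoint k - F n‖ ≤ 1/(n+1) := by
    intro n
    have h1 : ContinuousLinearMap.adjoint k - F n
        = ContinuousLinearMap.adjoint (k - (Pj (S n)) ∘L k) := by
      rw [map_sub, ContinuousLinearMap.adjoint_comp, adjoint_Pj]
    rw [h1, LinearIsometryEquiv.norm_map]
    apply ContinuousLinearMap.opNorm_le_bound _ (by positivity)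
    intro f
    have : (k - (Pj (S n)) ∘L k) f = k f - Pj (S n) (k f) := rfl
    rw [this]
    exact hS n f
  have htend : Filter.Tendsto F Filter.atTop (nhds (ContinuousLinearMap.adjoint k)) := by
    rw [tendsto_iff_norm_sub_tendsto_zero]
    refine squeeze_zero (fun n => norm_nonneg _) (g := fun n : ℕ => 1/((n:ℝ)+1)) ?_ ?_
    · intro n; rw [← norm_neg, neg_sub]; exact hnorm n
    · exact tendsto_one_div_add_atTop_nhds_zero_nat
  exact isCompactOperator_of_tendsto htend (Filter.Eventually.of_forall hFfin)

/-! ### The unitization of the compacts as a closed star subalgebra -/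

def CKsub : StarSubalgebra ℂ (l2P →L[ℂ] l2P) where
  carrier := {T | ∃ c : ℂ, ∃ k : l2P →L[ℂ] l2P, IsCompactOperator k ∧ T = c • 1 + k}
  algebraMap_mem' := fun c =>
    ⟨c, 0, isCompactOperator_zero, by rw [Algebra.algebraMap_eq_smul_one, add_zero]⟩
  add_mem' := by
    rintro T T' ⟨c, k, hk, rfl⟩ ⟨c', k', hk', rfl⟩
    exact ⟨c + c', k + k', hk.add hk', by rw [add_smul]; abel⟩
  mul_mem' := by
    rintro T T' ⟨c, k, hk, rfl⟩ ⟨c', k', hk', rfl⟩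
    refine ⟨c * c', c • k' + c' • k + k * k', ?_, ?_⟩
    · exact ((hk'.smul c).add (hk.smul c')).add (hk.comp_clm k')
    · simp only [mul_add, add_mul, smul_mul_assoc, mul_smul_comm, one_mul, mul_one, smul_smul,
        smul_add, mul_comm c' c]
      abel
  star_mem' := by
    rintro T ⟨c, k, hk, rfl⟩
    refine ⟨starRingEnd ℂ c, ContinuousLinearMap.adjoint k, isCompact_adjoint hk, ?_⟩
    rw [star_add, star_smul, star_one, ContinuousLinearMap.star_eq_adjoint]
    rfl

lemma mem_CKsub {T : l2P →L[ℂ] l2P} :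
    T ∈ CKsub ↔ ∃ c : ℂ, ∃ k : l2P →L[ℂ] l2P, IsCompactOperator k ∧ T = c • 1 + k :=
  Iff.rfl

set_option synthInstance.maxHeartbeats 1000000 in
lemma isClosed_CKsub : IsClosed (CKsub : Set (l2P →L[ℂ] l2P)) := by
  apply IsSeqClosed.isClosed
  intro T T0 hmem htend
  choose c k hk hT using hmem
  have hdiff : ∀ m n : ℕ, T m - T n = (c m - c n) • 1 + (k m - k n) := by
    intro m n
    rw [hT m, hT n, sub_smul]
    abel
  have hc : CauchySeq c := by
    have hTc : CauchySeq T := htend.cauchySeq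
    rw [Metric.cauchySeq_iff] at hTc ⊢
    intro ε hε
    obtain ⟨N, hN⟩ := hTc ε hε
    refine ⟨N, fun m hm n hn => ?_⟩
    have h1 := hN m hm n hn
    rw [dist_eq_norm] at h1 ⊢
    calc ‖c m - c n‖ ≤ ‖(c m - c n) • (1 : l2P →L[ℂ] l2P) + (k m - k n)‖ :=
          norm_const_le ((hk m).sub (hk n))
      _ = ‖T m - T n‖ := by rw [hdiff]
      _ < ε := h1
  obtain ⟨c0, hc0⟩ := cauchySeq_tendsto_of_complete hc
  have hkeq : ∀ n, k n = T n - c n • 1 := fun n => by rw [hT n]; abel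
  have hk0 : Filter.Tendsto k Filter.atTop (nhds (T0 - c0 • 1)) := by
    rw [funext hkeq]
    exact htend.sub (hc0.smul_const 1)
  have hcpt : IsCompactOperator (T0 - c0 • (1 : l2P →L[ℂ] l2P)) :=
    isCompactOperator_of_tendsto hk0 (Filter.Eventually.of_forall hk)
  exact ⟨c0, T0 - c0 • 1, hcpt, by abel⟩

/-! ### Properties of the translation operators -/

section Main

variable {t : ℤ → (l2P →L[ℂ] l2P)}
  (ht : ∀ (n : ℤ) (x : Pr),
      (∀ h : (x : ℤ) + n ∈ Pr, t n (δ x) = δ ⟨(x : ℤ) + n, h⟩) ∧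
      ((x : ℤ) + n ∉ Pr → t n (δ x) = 0))

include ht

lemma t_zero : t 0 = 1 := by
  apply clm_ext_delta
  intro x
  have hmem : (x : ℤ) + 0 ∈ Pr := by rw [add_zero]; exact x.2
  rw [(ht 0 x).1 hmem]
  have : (⟨(x : ℤ) + 0, hmem⟩ : Pr) = x := Subtype.ext (add_zero _)
  rw [this]
  rfl

lemma t_compact (H : ∀ n : ℤ, 0 < n → Even n → {p : ℤ | p ∈ Pr ∧ p + n ∈ Pr}.Finite)
    {n : ℤ} (hn : n ≠ 0) : IsCompactOperator (t n) := by
  classical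
  have hF : {x : Pr | (x : ℤ) + n ∈ Pr}.Finite := by
    have : {x : Pr | (x : ℤ) + n ∈ Pr} = Subtype.val ⁻¹' {p : ℤ | p ∈ Pr ∧ p + n ∈ Pr} := by
      ext x
      simp only [Set.mem_setOf_eq, Set.mem_preimage]
      exact ⟨fun h => ⟨x.2, h⟩, fun h => h.2⟩
    rw [this]
    exact Set.Finite.preimage (Set.injOn_of_injective Subtype.val_injective)
      (pairset_finite H hn)
  apply isCompact_of_finrank (hF.toFinset.image (fun x => t n (δ x)))
  intro f
  have h1 : HasSum (fun x : Pr => f x • t n (δ x)) (t n f) := by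
    have := (hasSum_delta f).mapL (t n)
    convert this using 2 with x
    rw [map_smul]
  have h2 : HasSum (fun x : Pr => f x • t n (δ x))
      (∑ x ∈ hF.toFinset, f x • t n (δ x)) := by
    apply hasSum_sum_of_ne_finset_zero
    intro x hx
    rw [(ht n x).2 (by simpa using hx), smul_zero]
  rw [h1.unique h2]
  apply Submodule.sum_mem
  intro x hxF
  exact Submodule.smul_mem _ _ (Submodule.subset_span
    (by simp only [Finset.coe_image, Set.mem_image, Finset.mem_coe]; exact ⟨x, hxF, rfl⟩))

lemma rk1_delta_mem (p q : Pr) :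
    rk1 (δ p) (δ q) ∈ StarAlgebra.adjoin ℂ (Set.range t) := by
  obtain ⟨a, hdet⟩ := exists_detecting p
  obtain ⟨b, hbdet⟩ := exists_detecting q
  set E : l2P →L[ℂ] l2P := t (-a) * (t a * (t ((p:ℤ) - (q:ℤ)) * (t (-b) * t b))) with hE
  have hgen : ∀ m : ℤ, t m ∈ StarAlgebra.adjoin ℂ (Set.range t) :=
    fun m => StarAlgebra.subset_adjoin ℂ _ ⟨m, rfl⟩
  have hmemE : E ∈ StarAlgebra.adjoin ℂ (Set.range t) := by
    rw [hE]
    exact mul_mem (hgen _) (mul_mem (hgen _) (mul_mem (hgen _) (mul_mem (hgen _) (hgen _))))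
  have hEeq : E = rk1 (δ p) (δ q) := by
    apply clm_ext_delta
    intro x
    rw [hE]
    simp only [ContinuousLinearMap.mul_apply]
    by_cases hx : x = q
    · subst hx
      -- step 1 : t b (δ x) = δ ⟨x + b, _⟩
      have hmem1 : (x : ℤ) + b ∈ Pr := (hbdet x).mpr rfl
      rw [(ht b x).1 hmem1]
      -- step 2 : back
      have hmem2 : (((⟨(x : ℤ) + b, hmem1⟩ : Pr) : ℤ)) + (-b) ∈ Pr := by
        have e : ((x : ℤ) + b) + (-b) = (x : ℤ) := by ring
        show ((x : ℤ) + b) + (-b) ∈ Pr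
        rw [e]; exact x.2
      rw [(ht (-b) _).1 hmem2]
      have e2 : (⟨(((⟨(x : ℤ) + b, hmem1⟩ : Pr) : ℤ)) + (-b), hmem2⟩ : Pr) = x :=
        Subtype.ext (by show ((x : ℤ) + b) + (-b) = (x : ℤ); ring)
      rw [e2]
      -- step 3 : translation to p
      have hmem3 : (x : ℤ) + ((p:ℤ) - (x:ℤ)) ∈ Pr := by
        have e : (x : ℤ) + ((p:ℤ) - (x:ℤ)) = (p : ℤ) := by ring
        rw [e]; exact p.2
      rw [(ht ((p:ℤ) - (x:ℤ)) x).1 hmem3]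
      have e3 : (⟨(x : ℤ) + ((p:ℤ) - (x:ℤ)), hmem3⟩ : Pr) = p :=
        Subtype.ext (by show (x : ℤ) + ((p:ℤ) - (x:ℤ)) = (p : ℤ); ring)
      rw [e3]
      -- step 4 : detect p
      have hmem4 : (p : ℤ) + a ∈ Pr := (hdet p).mpr rfl
      rw [(ht a p).1 hmem4]
      have hmem5 : (((⟨(p : ℤ) + a, hmem4⟩ : Pr) : ℤ)) + (-a) ∈ Pr := by
        have e : ((p : ℤ) + a) + (-a) = (p : ℤ) := by ring
        show ((p : ℤ) + a) + (-a) ∈ Pr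
        rw [e]; exact p.2
      rw [(ht (-a) _).1 hmem5]
      have e5 : (⟨(((⟨(p : ℤ) + a, hmem4⟩ : Pr) : ℤ)) + (-a), hmem5⟩ : Pr) = p :=
        Subtype.ext (by show ((p : ℤ) + a) + (-a) = (p : ℤ); ring)
      rw [e5]
      -- RHS
      rw [rk1_apply, inner_delta_left, delta_apply, if_pos rfl, one_smul]
    · have h0 : (x : ℤ) + b ∉ Pr := fun h => hx ((hbdet x).mp h)
      rw [(ht b x).2 h0]
      simp only [map_zero]
      rw [rk1_apply, inner_delta_left, delta_apply, if_neg (fun h => hx h.symm), zero_smul]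
  rw [← hEeq]
  exact hmemE


/-! ### Membership of rank one operators and compacts in the closure -/

open Filter in
lemma rk1_vec_mem (p : Pr) (v : l2P) :
    rk1 (δ p) v ∈ (StarAlgebra.adjoin ℂ (Set.range t)).topologicalClosure := by
  have happrox : ∀ S : Finset Pr, rk1 (δ p) (Pj S v) ∈ StarAlgebra.adjoin ℂ (Set.range t) := by
    intro S
    have heq : rk1 (δ p) (Pj S v) = ∑ x ∈ S, (starRingEnd ℂ) (v x) • rk1 (δ p) (δ x) := by
      apply ContinuousLinearMap.ext; intro f
      rw [rk1_apply, Pj_apply, sum_inner, ContinuousLinearMap.sum_apply, Finset.sum_smul]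
      exact Finset.sum_congr rfl fun x _ => by
        rw [inner_smul_left, ContinuousLinearMap.smul_apply, rk1_apply, smul_smul]
    rw [heq]
    exact sum_mem fun x _ => SMulMemClass.smul_mem _ (rk1_delta_mem ht p x)
  have hb : ∀ S : Finset Pr, ‖rk1 (δ p) (Pj S v) - rk1 (δ p) v‖ ≤ ‖Pj S v - v‖ := by
    intro S
    rw [rk1_sub_right]
    calc ‖rk1 (δ p) (Pj S v - v)‖ ≤ ‖Pj S v - v‖ * ‖δ p‖ := rk1_norm_le _ _
      _ = ‖Pj S v - v‖ := by rw [norm_delta, mul_one]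
  have htendS : Tendsto (fun S => rk1 (δ p) (Pj S v)) atTop (nhds (rk1 (δ p) v)) := by
    rw [tendsto_iff_norm_sub_tendsto_zero]
    refine squeeze_zero (fun S => norm_nonneg _) hb ?_
    have := (tendsto_iff_norm_sub_tendsto_zero).mp (tendsto_Pj v)
    exact this
  exact ((StarAlgebra.adjoin ℂ (Set.range t)).isClosed_topologicalClosure).mem_of_tendsto htendS
    (Eventually.of_forall fun S =>
      (StarAlgebra.adjoin ℂ (Set.range t)).le_topologicalClosure (happrox S))

lemma Pjk_mem (S : Finset Pr) (k : l2P →L[ℂ] l2P) :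
    (Pj S) ∘L k ∈ (StarAlgebra.adjoin ℂ (Set.range t)).topologicalClosure := by
  have heq : (Pj S) ∘L k = ∑ x ∈ S, rk1 (δ x) (ContinuousLinearMap.adjoint k (δ x)) := by
    apply ContinuousLinearMap.ext; intro f
    rw [ContinuousLinearMap.comp_apply, Pj_apply, ContinuousLinearMap.sum_apply]
    refine Finset.sum_congr rfl fun x _ => ?_
    rw [rk1_apply, ContinuousLinearMap.adjoint_inner_left, inner_delta_left]
  rw [heq]
  exact sum_mem fun x _ => rk1_vec_mem ht x _

open Filter in
lemma compact_mem {k : l2P →L[ℂ] l2P} (hk : IsCompactOperator k) :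
    k ∈ (StarAlgebra.adjoin ℂ (Set.range t)).topologicalClosure := by
  have hchoice : ∀ n : ℕ, ∃ S : Finset Pr, ∀ f, ‖k f - Pj S (k f)‖ ≤ (1/(n+1)) * ‖f‖ :=
    fun n => trunc hk (by positivity)
  choose S hS using hchoice
  have hnorm : ∀ n : ℕ, ‖(Pj (S n)) ∘L k - k‖ ≤ 1/((n:ℝ)+1) := by
    intro n
    apply ContinuousLinearMap.opNorm_le_bound _ (by positivity)
    intro f
    have : ((Pj (S n)) ∘L k - k) f = -(k f - Pj (S n) (k f)) := by
      simp only [ContinuousLinearMap.sub_apply, ContinuousLinearMap.comp_apply]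
      abel
    rw [this, norm_neg]
    exact hS n f
  have htendS : Tendsto (fun n => (Pj (S n)) ∘L k) atTop (nhds k) := by
    rw [tendsto_iff_norm_sub_tendsto_zero]
    refine squeeze_zero (fun n => norm_nonneg _) (g := fun n : ℕ => 1/((n:ℝ)+1)) hnorm ?_
    exact tendsto_one_div_add_atTop_nhds_zero_nat
  exact ((StarAlgebra.adjoin ℂ (Set.range t)).isClosed_topologicalClosure).mem_of_tendsto htendS
    (Eventually.of_forall fun n => Pjk_mem ht (S n) k)

end Main

set_option maxHeartbeats 1200000 in
/-- The C*-subalgebra of `B(ℓ²(P))` generated by the partial translation operators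
`{tₙ : n ∈ ℤ}` equals the unitization `{λ·1 + k : λ ∈ ℂ, k compact}` of the compact
operators if and only if for every positive even integer `n` the set of primes `p`
with `p + n` prime is finite (i.e. de Polignac's conjecture fails for every even `n`). -/
theorem stmt11 (t : ℤ → (l2P →L[ℂ] l2P))
    (ht : ∀ (n : ℤ) (x : Pr),
      (∀ h : (x : ℤ) + n ∈ Pr, t n (δ x) = δ ⟨(x : ℤ) + n, h⟩) ∧
      ((x : ℤ) + n ∉ Pr → t n (δ x) = 0)) :
    (∀ T : l2P →L[ℂ] l2P,
      T ∈ (StarAlgebra.adjoin ℂ (Set.range t)).topologicalClosure ↔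
      ∃ (c : ℂ) (k : l2P →L[ℂ] l2P), IsCompactOperator k ∧ T = c • 1 + k) ↔
    (∀ n : ℤ, 0 < n → Even n → {p : ℤ | p ∈ Pr ∧ p + n ∈ Pr}.Finite) := by
  constructor
  · intro Heq n hn _hev
    by_contra hinf
    have htn : t n ∈ (StarAlgebra.adjoin ℂ (Set.range t)).topologicalClosure :=
      (StarAlgebra.adjoin ℂ (Set.range t)).le_topologicalClosure
        (StarAlgebra.subset_adjoin ℂ _ ⟨n, rfl⟩)
    obtain ⟨c, k, hk, hT⟩ := (Heq (t n)).mp htn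
    have hsubinf : {x : Pr | (x : ℤ) + n ∈ Pr}.Infinite := by
      intro hfin
      apply hinf
      have himg : {p : ℤ | p ∈ Pr ∧ p + n ∈ Pr} = Subtype.val '' {x : Pr | (x : ℤ) + n ∈ Pr} := by
        ext p; constructor
        · rintro ⟨hp, hpn⟩; exact ⟨⟨p, hp⟩, hpn, rfl⟩
        · rintro ⟨x, hx, rfl⟩; exact ⟨x.2, hx⟩
      rw [himg]; exact hfin.image _
    have hbad := finite_bad hk one_pos
    refine hsubinf (hbad.subset ?_)
    intro x hx
    simp only [Set.mem_setOf_eq] at hx ⊢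
    have hy := (ht n x).1 hx
    set y : Pr := (⟨(x:ℤ)+n, hx⟩ : Pr) with hydef
    have h2 : c • δ x + k (δ x) = δ y := by
      rw [← hy, hT]
      simp
    have hkx : k (δ x) = δ y - c • δ x := by rw [← h2]; abel
    have hyx : ¬ (y = x) := by
      intro h
      have := congrArg Subtype.val h
      rw [hydef] at this
      simp only at this
      omega
    have hinner : ⟪δ y, c • δ x⟫_ℂ = 0 := by
      rw [inner_smul_right, inner_delta_delta, if_neg hyx, mul_zero]
    have hsq := norm_sub_sq (𝕜 := ℂ) (δ y) (c • δ x)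
    rw [hinner] at hsq
    simp only [map_zero, mul_zero, sub_zero] at hsq
    rw [norm_delta] at hsq
    have h1le : 1 ≤ ‖δ y - c • δ x‖ ^ 2 := by
      rw [hsq]; nlinarith [sq_nonneg ‖c • δ x‖]
    rw [hkx]
    nlinarith [norm_nonneg (δ y - c • δ x)]
  · intro H T
    constructor
    · intro hT
      have hle : StarAlgebra.adjoin ℂ (Set.range t) ≤ CKsub := by
        apply StarAlgebra.adjoin_le
        rintro _ ⟨n, rfl⟩
        by_cases hn : n = 0
        · subst hn
          rw [t_zero ht]
          exact ⟨1, 0, isCompactOperator_zero, by rw [one_smul, add_zero]⟩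
        · exact ⟨0, t n, t_compact ht H hn, by rw [zero_smul, zero_add]⟩
      exact mem_CKsub.mp (StarSubalgebra.topologicalClosure_minimal hle isClosed_CKsub hT)
    · rintro ⟨c, k, hk, rfl⟩
      refine add_mem ?_ (compact_mem ht hk)
      rw [← Algebra.algebraMap_eq_smul_one]
      exact algebraMap_mem _ c
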